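/- arXiv:2305.17429 — 3 statements merged into one kernel-verified Lean document; each statement's English description precedes it below -/
import Mathlib

section
/- For any vector s ∈ ℝ^n with nonnegative entries, any vector x ∈ ℝ^p with nonnegative entries, and any binary matrix a ∈ {0,1}^{n×p}, we have ∑_{l=1}^n s_l (∑_{m=1}^p a_{l,m} x_m)^2 ≤ (max_{m} ∑_{l=1}^n s_l a_{l,m}) · (∑_{m=1}^p x_m)^2. -/
open Finset

theorem stmt_0 (n p : ℕ) (hp : 1 ≤ p)
    (s : Fin n → ℝ) (hs : ∀ l, 0 ≤ s l)
    (x : Fin p → ℝ) (hx : ∀ m, 0 ≤ x m)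
    (a : Fin n → Fin p → ℝ) (ha : ∀ l m, a l m = 0 ∨ a l m = 1) :
    ∑ l, s l * (∑ m, a l m * x m) ^ 2 ≤
      (⨆ m : Fin p, ∑ l, s l * a l m) * (∑ m, x m) ^ 2 := by
  have hp' : Nonempty (Fin p) := ⟨⟨0, hp⟩⟩
  set M := ⨆ m : Fin p, ∑ l, s l * a l m with hM
  have hle : ∀ m, ∑ l, s l * a l m ≤ M := fun m =>
    le_ciSup (f := fun m : Fin p => ∑ l, s l * a l m)
      (Set.Finite.bddAbove (Set.finite_range _)) m
  have hXnn : 0 ≤ ∑ m, x m := Finset.sum_nonneg fun m _ => hx m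
  have h1 : ∀ l, ∑ m, a l m * x m ≤ ∑ m, x m := fun l =>
    Finset.sum_le_sum fun m _ => by
      rcases ha l m with h | h <;> simp [h, hx m]
  have h2 : ∀ l, 0 ≤ ∑ m, a l m * x m := fun l =>
    Finset.sum_nonneg fun m _ => by rcases ha l m with h | h <;> simp [h, hx m]
  calc ∑ l, s l * (∑ m, a l m * x m) ^ 2
      ≤ ∑ l, s l * ((∑ m, a l m * x m) * (∑ m, x m)) := by
        apply Finset.sum_le_sum; intro l _
        apply mul_le_mul_of_nonneg_left _ (hs l)
        rw [sq]
        exact mul_le_mul_of_nonneg_left (h1 l) (h2 l)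
    _ = (∑ m, (∑ l, s l * a l m) * x m) * (∑ m, x m) := by
        calc ∑ l, s l * ((∑ m, a l m * x m) * ∑ m', x m')
            = ∑ l, ∑ m, s l * (a l m * x m) * ∑ m', x m' := by
              refine Finset.sum_congr rfl fun l _ => ?_
              rw [← Finset.sum_mul, ← Finset.mul_sum, mul_assoc]
          _ = ∑ m, ∑ l, s l * (a l m * x m) * ∑ m', x m' := Finset.sum_comm
          _ = (∑ m, (∑ l, s l * a l m) * x m) * ∑ m', x m' := by
              rw [Finset.sum_mul]
              refine Finset.sum_congr rfl fun m _ => ?_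
              rw [Finset.sum_mul, Finset.sum_mul]
              exact Finset.sum_congr rfl fun l _ => by ring
    _ ≤ (∑ m, M * x m) * (∑ m, x m) := by
        apply mul_le_mul_of_nonneg_right _ hXnn
        exact Finset.sum_le_sum fun m _ => mul_le_mul_of_nonneg_right (hle m) (hx m)
    _ = M * (∑ m, x m) ^ 2 := by rw [← Finset.mul_sum]; ring
end

section
/- For any vector s ∈ ℝ^n with nonnegative entries, any vector x ∈ ℝ^p (possibly with negative entries), and any binary matrix a ∈ {0,1}^{n×p}, we have ∑_{l=1}^n s_l (∑_{m=1}^p a_{l,m} x_m)^2 ≤ (max_{m} ∑_{l=1}^n s_l a_{l,m}) · (∑_{m=1}^p |x_m|)^2. -/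
open Finset

theorem stmt_1 (n p : ℕ) (hp : 1 ≤ p)
    (s : Fin n → ℝ) (hs : ∀ l, 0 ≤ s l)
    (x : Fin p → ℝ)
    (a : Fin n → Fin p → ℝ) (ha : ∀ l m, a l m = 0 ∨ a l m = 1) :
    ∑ l, s l * (∑ m, a l m * x m) ^ 2 ≤
      (⨆ m : Fin p, ∑ l, s l * a l m) * (∑ m, |x m|) ^ 2 := by
  haveI : Nonempty (Fin p) := ⟨⟨0, hp⟩⟩
  set C := ⨆ m : Fin p, ∑ l, s l * a l m with hCdef
  have hC : ∀ m, ∑ l, s l * a l m ≤ C := fun m =>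
    le_ciSup (Set.Finite.bddAbove (Set.finite_range fun m : Fin p => ∑ l, s l * a l m)) m
  have ha0 : ∀ l m, 0 ≤ a l m := fun l m => by rcases ha l m with h|h <;> simp [h]
  have ha1 : ∀ l m, a l m ≤ 1 := fun l m => by rcases ha l m with h|h <;> simp [h]
  have step1 : ∑ l, s l * (∑ m, a l m * x m) ^ 2 ≤
      ∑ l, s l * (∑ m, a l m * |x m|) ^ 2 := by
    apply Finset.sum_le_sum; intro l _
    apply mul_le_mul_of_nonneg_left _ (hs l)
    have h1 : |∑ m, a l m * x m| ≤ ∑ m, a l m * |x m| := by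
      calc |∑ m, a l m * x m| ≤ ∑ m, |a l m * x m| := Finset.abs_sum_le_sum_abs _ _
        _ = ∑ m, a l m * |x m| := by
            apply Finset.sum_congr rfl; intro m _
            rw [abs_mul, abs_of_nonneg (ha0 l m)]
    calc (∑ m, a l m * x m) ^ 2 = |∑ m, a l m * x m| ^ 2 := (sq_abs _).symm
      _ ≤ (∑ m, a l m * |x m|) ^ 2 := pow_le_pow_left₀ (abs_nonneg _) h1 2
  refine step1.trans ?_
  calc ∑ l, s l * (∑ m, a l m * |x m|) ^ 2
      = ∑ l, ∑ m, ∑ m', (|x m| * |x m'|) * (s l * (a l m * a l m')) := by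
        refine sum_congr rfl fun l _ => ?_
        rw [sq, Finset.sum_mul_sum, Finset.mul_sum]
        refine sum_congr rfl fun m _ => ?_
        rw [Finset.mul_sum]
        exact sum_congr rfl fun m' _ => by ring
    _ = ∑ m, ∑ m', (|x m| * |x m'|) * ∑ l, s l * (a l m * a l m') := by
        rw [Finset.sum_comm]
        refine sum_congr rfl fun m _ => ?_
        rw [Finset.sum_comm]
        refine sum_congr rfl fun m' _ => ?_
        rw [Finset.mul_sum]
    _ ≤ ∑ m, ∑ m', (|x m| * |x m'|) * C := by
        refine sum_le_sum fun m _ => sum_le_sum fun m' _ => ?_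
        refine mul_le_mul_of_nonneg_left ?_ (mul_nonneg (abs_nonneg _) (abs_nonneg _))
        calc ∑ l, s l * (a l m * a l m')
            ≤ ∑ l, s l * a l m := sum_le_sum fun l _ =>
              mul_le_mul_of_nonneg_left
                (mul_le_of_le_one_right (ha0 l m) (ha1 l m')) (hs l)
          _ ≤ C := hC m
    _ = C * (∑ m, |x m|) ^ 2 := by
        rw [sq, Finset.sum_mul_sum, Finset.mul_sum]
        refine sum_congr rfl fun m _ => ?_
        rw [Finset.mul_sum]
        exact sum_congr rfl fun m' _ => by ring
end

section
/- If σ < 1/(2 ln 2 · √(2 ln p)) for p ≥ 2, q_a ∈ (0,1], and n ≤ p with n ≥ 2, then σ satisfies σ < (1/(√2 · ln(1+q_a))) · (ln(1/(1−(1−p^{−3})^{1/n})))^{−1/2}, i.e., κ√(2g(3 ln p)) < 1 where κ = σ ln(1+q_a) and g(θ) = ln(1/(1−(1−e^{−θ})^{1/n})). -/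
theorem stmt_11 (p n : ℕ) (hp : 2 ≤ p) (hn : 2 ≤ n) (hnp : n ≤ p)
    (qa : ℝ) (hqa : qa ∈ Set.Ioc (0 : ℝ) 1) (σ : ℝ) (hσ : 0 < σ)
    (hbound : σ < 1 / (2 * Real.log 2 * Real.sqrt (2 * Real.log p))) :
    σ < 1 / (Real.sqrt 2 * Real.log (1 + qa)) *
        (Real.sqrt (Real.log (1 / (1 - (1 - 1 / (p : ℝ) ^ 3) ^ ((1 : ℝ) / n)))))⁻¹ ∧
    σ * Real.log (1 + qa) *
        Real.sqrt (2 * Real.log (1 / (1 - (1 - 1 / (p : ℝ) ^ 3) ^ ((1 : ℝ) / n)))) < 1 := by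
  obtain ⟨hqa0, hqa1⟩ := hqa
  have hp1 : (1 : ℝ) < (p : ℝ) := by exact_mod_cast Nat.lt_of_lt_of_le one_lt_two hp
  have hp2 : (2 : ℝ) ≤ (p : ℝ) := by exact_mod_cast hp
  have hp0 : (0 : ℝ) < (p : ℝ) := by linarith
  have hn0 : (0 : ℝ) < (n : ℝ) := by
    have : (2 : ℝ) ≤ (n : ℝ) := by exact_mod_cast hn
    linarith
  have hnp' : (n : ℝ) ≤ (p : ℝ) := by exact_mod_cast hnp
  set t : ℝ := 1 / (p : ℝ) ^ 3 with ht
  have ht0 : 0 < t := by positivity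
  have ht1 : t < 1 := by
    rw [ht, div_lt_one (by positivity)]
    exact one_lt_pow₀ hp1 (by norm_num)
  set x : ℝ := 1 - t with hx
  have hx0 : 0 < x := by linarith
  have hx1 : x < 1 := by rw [hx]; linarith
  -- Bernoulli: x ≤ (1 - t/n)^n
  have htn0 : 0 < t / n := by positivity
  have htn1 : t / n < 1 := by
    have : t / n ≤ t := by
      apply div_le_self ht0.le
      exact_mod_cast Nat.one_le_of_lt hn
    linarith
  have hb : x ≤ (1 - t / n) ^ n := by
    have h := one_add_mul_le_pow (a := -(t / n)) (by nlinarith) n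
    have hne : (n : ℝ) ≠ 0 := ne_of_gt hn0
    have : 1 + (n : ℝ) * -(t / n) = 1 - t := by field_simp; ring
    rw [this] at h
    simpa [hx, sub_eq_add_neg] using h
  -- x^{1/n} ≤ 1 - t/n
  have hkey : x ^ ((1 : ℝ) / n) ≤ 1 - t / n := by
    have h1 : x ^ ((1 : ℝ) / n) ≤ ((1 - t / n) ^ n) ^ ((1 : ℝ) / n) :=
      Real.rpow_le_rpow hx0.le hb (by positivity)
    have h2 : ((1 - t / n) ^ n) ^ ((1 : ℝ) / n) = 1 - t / n := by
      rw [← Real.rpow_natCast (1 - t / n) n, ← Real.rpow_mul (by linarith)]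
      rw [mul_one_div, div_self (ne_of_gt hn0), Real.rpow_one]
    linarith [h1, h2.le, h2.ge]
  set y : ℝ := 1 - x ^ ((1 : ℝ) / n) with hy
  have hxr0 : 0 < x ^ ((1 : ℝ) / n) := Real.rpow_pos_of_pos hx0 _
  have hxr1 : x ^ ((1 : ℝ) / n) < 1 := Real.rpow_lt_one hx0.le hx1 (by positivity)
  have hy0 : 0 < y := by rw [hy]; linarith
  have hy1 : y < 1 := by rw [hy]; linarith
  have hyge : 1 / (p : ℝ) ^ 4 ≤ y := by
    have h1 : t / n ≤ y := by simp only [hy]; linarith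
    have h2 : 1 / (p : ℝ) ^ 4 ≤ t / n := by
      rw [ht, div_div]
      apply one_div_le_one_div_of_le (by positivity)
      calc (p : ℝ) ^ 3 * n ≤ (p : ℝ) ^ 3 * p := by
            apply mul_le_mul_of_nonneg_left hnp' (by positivity)
        _ = (p : ℝ) ^ 4 := by ring
    linarith
  set A : ℝ := Real.log (1 / y) with hA
  have hA0 : 0 < A := by
    apply Real.log_pos
    rw [lt_div_iff₀ hy0]; linarith
  have hAle : A ≤ 4 * Real.log p := by
    have h1 : 1 / y ≤ (p : ℝ) ^ 4 := by
      rw [div_le_iff₀ hy0]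
      calc (1 : ℝ) = (p : ℝ) ^ 4 * (1 / (p : ℝ) ^ 4) := by field_simp
        _ ≤ (p : ℝ) ^ 4 * y := by
            apply mul_le_mul_of_nonneg_left hyge (by positivity)
    calc A ≤ Real.log ((p : ℝ) ^ 4) := Real.log_le_log (by positivity) h1
      _ = 4 * Real.log p := by rw [Real.log_pow]; push_cast; ring
  have hlogp : 0 < Real.log p := Real.log_pos hp1
  have hlog2 : 0 < Real.log 2 := Real.log_pos one_lt_two
  set L : ℝ := Real.log (1 + qa) with hL
  have hL0 : 0 < L := Real.log_pos (by linarith)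
  have hL2 : L ≤ Real.log 2 := Real.log_le_log (by linarith) (by linarith)
  -- sqrt bounds
  have hs2 : Real.sqrt (2 * A) ≤ 2 * Real.sqrt (2 * Real.log p) := by
    have h48 : Real.sqrt (8 * Real.log p) = 2 * Real.sqrt (2 * Real.log p) := by
      rw [show (8 : ℝ) * Real.log p = 2 ^ 2 * (2 * Real.log p) by ring,
        Real.sqrt_mul (by positivity), Real.sqrt_sq (by norm_num)]
    rw [← h48]
    apply Real.sqrt_le_sqrt
    linarith
  have hsA0 : 0 < Real.sqrt A := Real.sqrt_pos.mpr hA0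
  have hslogp0 : 0 < Real.sqrt (2 * Real.log p) := Real.sqrt_pos.mpr (by linarith)
  have hbound' : σ * (2 * Real.log 2 * Real.sqrt (2 * Real.log p)) < 1 := by
    rw [lt_div_iff₀ (by positivity)] at hbound
    linarith
  have hsecond : σ * L * Real.sqrt (2 * A) < 1 := by
    calc σ * L * Real.sqrt (2 * A)
        ≤ σ * Real.log 2 * (2 * Real.sqrt (2 * Real.log p)) := by
          apply mul_le_mul (by nlinarith) hs2 (Real.sqrt_nonneg _) (by positivity)
      _ = σ * (2 * Real.log 2 * Real.sqrt (2 * Real.log p)) := by ring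
      _ < 1 := hbound'
  refine ⟨?_, hsecond⟩
  have hsplit : Real.sqrt (2 * A) = Real.sqrt 2 * Real.sqrt A := Real.sqrt_mul (by norm_num) A
  have hrw : 1 / (Real.sqrt 2 * L) * (Real.sqrt A)⁻¹ = 1 / (L * (Real.sqrt 2 * Real.sqrt A)) := by
    rw [one_div, one_div, ← mul_inv]
    congr 1
    ring
  rw [hrw, lt_div_iff₀ (by positivity)]
  have heq : σ * L * Real.sqrt (2 * A) = σ * (L * (Real.sqrt 2 * Real.sqrt A)) := by
    rw [hsplit]; ring
  linarith [hsecond, heq]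
end
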